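/- Let Ω be nonempty, X and Y uncertain variables with finite ranges. For every function g : 𝕏 → 𝕌 with U = g ∘ X, the leakage satisfies L(U → Y) ≤ log₂(|⟦X⟧| − min_{y ∈ ⟦Y⟧} |⟦X | Y = y⟧| + 1). -/

import Mathlib

open Set

/-- Conditional range ⟦X | Y = y⟧ = {X ω : Y ω = y}. -/
def crange {Ω 𝕏 𝕐 : Type*} (X : Ω → 𝕏) (Y : Ω → 𝕐) (y : 𝕐) : Set 𝕏 :=
  {x | ∃ ω, Y ω = y ∧ X ω = x}

/-- min_{y ∈ ⟦Y⟧} |⟦X | Y = y⟧|. -/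
noncomputable def minCond {Ω 𝕏 𝕐 : Type*} (X : Ω → 𝕏) (Y : Ω → 𝕐) : ℕ :=
  sInf ((fun y => (crange X Y y).ncard) '' Set.range Y)

/-- Non-stochastic brute-force guessing leakage
L(X → Y) = log₂(|⟦X⟧| / min_{y ∈ ⟦Y⟧} |⟦X|Y=y⟧|). -/
noncomputable def leak {Ω 𝕏 𝕐 : Type*} (X : Ω → 𝕏) (Y : Ω → 𝕐) : ℝ :=
  Real.logb 2 (((Set.range X).ncard : ℝ) / (minCond X Y : ℝ))

/-- Maximal non-stochastic brute-force leakage (closed formula)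
L⋆(X → Y) = log₂(|⟦X⟧| − min_{y∈⟦Y⟧}|⟦X|Y=y⟧| + 1). -/
noncomputable def maxLeak {Ω 𝕏 𝕐 : Type*} (X : Ω → 𝕏) (Y : Ω → 𝕐) : ℝ :=
  Real.logb 2 (((Set.range X).ncard : ℝ) - (minCond X Y : ℝ) + 1)

lemma crange_comp {Ω 𝕏 𝕐 𝕌 : Type*} (X : Ω → 𝕏) (Y : Ω → 𝕐) (g : 𝕏 → 𝕌) (y : 𝕐) :
    crange (g ∘ X) Y y = g '' crange X Y y := by
  ext u
  constructor
  · rintro ⟨ω, hω, rfl⟩; exact ⟨X ω, ⟨ω, hω, rfl⟩, rfl⟩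
  · rintro ⟨x, ⟨ω, hω, rfl⟩, rfl⟩; exact ⟨ω, hω, rfl⟩

lemma crange_subset_range {Ω 𝕏 𝕐 : Type*} (X : Ω → 𝕏) (Y : Ω → 𝕐) (y : 𝕐) :
    crange X Y y ⊆ Set.range X := by
  rintro x ⟨ω, _, rfl⟩; exact ⟨ω, rfl⟩

theorem stmt_6 {Ω 𝕏 𝕐 𝕌 : Type*} [Nonempty Ω] (X : Ω → 𝕏) (Y : Ω → 𝕐) (g : 𝕏 → 𝕌)
    (hX : (Set.range X).Finite) (hY : (Set.range Y).Finite) :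
    leak (g ∘ X) Y ≤
      Real.logb 2 (((Set.range X).ncard : ℝ) - (minCond X Y : ℝ) + 1) := by
  set U := g ∘ X with hU
  have hUrange : Set.range U = g '' Set.range X := Set.range_comp g X
  have hUf : (Set.range U).Finite := hUrange ▸ hX.image g
  -- pick y₀ realizing minCond U Y
  have hSne : ((fun y => (crange U Y y).ncard) '' Set.range Y).Nonempty :=
    (Set.range_nonempty Y).image _
  obtain ⟨y₀, hy₀, hy₀eq⟩ := Nat.sInf_mem hSne
  -- notation
  set n := (Set.range X).ncard with hn
  set m := minCond X Y with hm
  set my := (crange X Y y₀).ncard with hmy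
  set c := minCond U Y with hc
  have hcf : (crange U Y y₀).Finite := hUf.subset (crange_subset_range U Y y₀)
  have hXyf : (crange X Y y₀).Finite := hX.subset (crange_subset_range X Y y₀)
  -- c = |crange U y₀| ≥ 1
  have hceq : c = (crange U Y y₀).ncard := hy₀eq.symm
  have hcpos : 0 < c := by
    rw [hceq]
    obtain ⟨ω, hω⟩ := hy₀
    exact Set.ncard_pos hcf |>.mpr ⟨U ω, ω, hω, rfl⟩
  -- m ≤ my ≤ n
  have hmmy : m ≤ my := Nat.sInf_le ⟨y₀, hy₀, rfl⟩
  have hmyn : my ≤ n := Set.ncard_le_ncard (crange_subset_range X Y y₀) hX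
  -- key counting: |range U| ≤ c + (n - my)
  have hkey : (Set.range U).ncard ≤ c + (n - my) := by
    have hsplit : Set.range U ⊆ g '' crange X Y y₀ ∪ g '' (Set.range X \ crange X Y y₀) := by
      rw [hUrange, ← Set.image_union, Set.union_diff_cancel (crange_subset_range X Y y₀)]
    calc (Set.range U).ncard
        ≤ (g '' crange X Y y₀ ∪ g '' (Set.range X \ crange X Y y₀)).ncard :=
          Set.ncard_le_ncard hsplit ((hXyf.image g).union (hX.diff.image g))
      _ ≤ (g '' crange X Y y₀).ncard + (g '' (Set.range X \ crange X Y y₀)).ncard :=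
          Set.ncard_union_le _ _
      _ ≤ c + (n - my) := by
          apply Nat.add_le_add
          · rw [hceq, crange_comp]
          · calc (g '' (Set.range X \ crange X Y y₀)).ncard
                ≤ (Set.range X \ crange X Y y₀).ncard :=
                  Set.ncard_image_le hX.diff
              _ = n - my := Set.ncard_diff (crange_subset_range X Y y₀) hXyf
  -- real inequality
  have hc1 : (1 : ℝ) ≤ (c : ℝ) := by exact_mod_cast hcpos
  have hUpos : 0 < ((Set.range U).ncard : ℝ) := by
    have : (Set.range U).Nonempty := Set.range_nonempty U
    exact_mod_cast Set.ncard_pos hUf |>.mpr this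
  have hdivpos : 0 < ((Set.range U).ncard : ℝ) / (c : ℝ) :=
    div_pos hUpos (lt_of_lt_of_le one_pos hc1)
  have hratio : ((Set.range U).ncard : ℝ) / (c : ℝ) ≤ (n : ℝ) - (m : ℝ) + 1 := by
    rw [div_le_iff₀ (lt_of_lt_of_le one_pos hc1)]
    have h1 : ((Set.range U).ncard : ℝ) ≤ (c : ℝ) + ((n : ℝ) - (m : ℝ)) := by
      have : ((Set.range U).ncard : ℝ) ≤ (c : ℝ) + ((n : ℝ) - (my : ℝ)) := by
        have := hkey
        have hsub : ((n - my : ℕ) : ℝ) = (n : ℝ) - (my : ℝ) := by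
          rw [Nat.cast_sub hmyn]
        calc ((Set.range U).ncard : ℝ) ≤ ((c + (n - my) : ℕ) : ℝ) := by exact_mod_cast hkey
          _ = (c : ℝ) + ((n : ℝ) - (my : ℝ)) := by push_cast [Nat.cast_sub hmyn]; ring
      have h2 : (m:ℝ) ≤ (my:ℝ) := by exact_mod_cast hmmy
      linarith
    have hnm : (0 : ℝ) ≤ (n : ℝ) - (m : ℝ) := by
      have : m ≤ n := le_trans hmmy hmyn
      have h3 : (m:ℝ) ≤ (n:ℝ) := by exact_mod_cast this
      linarith
    nlinarith
  unfold leak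
  exact Real.logb_le_logb_of_le one_lt_two hdivpos (by
    calc ((Set.range U).ncard : ℝ) / (c : ℝ) ≤ (n : ℝ) - (m : ℝ) + 1 := hratio
      _ = _ := rfl)
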